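/- Let T : X → X be a continuous self-map of a compact metric space, and let φ ∈ Lip(X) with γ(φ) := sup_{n≥1,x∈X}(S_n φ(x) − n β(φ)) < +∞. Suppose x₀ ∈ supp μ for some maximizing measure μ of φ, and that there exist α ∈ ℝ and N ≥ 1 with S_N φ(x₀) − N β(φ) < α. Then α ≥ −γ(φ). Equivalently, inf_{n≥1, x ∈ supp μ} (S_n φ(x) − n β(φ)) ≥ −γ(φ). -/

import Mathlib

open MeasureTheory

noncomputable def beta {X : Type*} [TopologicalSpace X] [MeasurableSpace X]
    (T : X → X) (φ : X → ℝ) : ℝ :=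
  sSup ((fun μ : Measure X => ∫ x, φ x ∂μ) ''
    {μ : Measure X | IsProbabilityMeasure μ ∧ μ.map T = μ})

def msupp {X : Type*} [TopologicalSpace X] [MeasurableSpace X] (μ : Measure X) : Set X :=
  {x | ∀ U : Set X, IsOpen U → x ∈ U → 0 < μ U}

/-- if `γ` bounds `S_n φ − n β(φ)` from above, `μ` maximizes
`φ`, `x₀ ∈ supp μ` and `S_N φ(x₀) − N β(φ) < α`, then `α ≥ −γ`; equivalently
`S_n φ ≥ n β(φ) − γ` on `supp μ`. -/
theorem stmt18 {X : Type*} [MetricSpace X] [CompactSpace X]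
    [MeasurableSpace X] [BorelSpace X]
    (T : X → X) (hT : Continuous T)
    (φ : X → ℝ) (Kφ : NNReal) (hφ : LipschitzWith Kφ φ)
    (γ : ℝ)
    (hγ : ∀ n : ℕ, 1 ≤ n → ∀ x : X,
      ∑ k ∈ Finset.range n, φ (T^[k] x) - n * beta T φ ≤ γ)
    (μ : Measure X) (hμp : IsProbabilityMeasure μ) (hμinv : μ.map T = μ)
    (hμmax : ∫ x, φ x ∂μ = beta T φ)
    (x₀ : X) (hx₀ : x₀ ∈ msupp μ)
    (α : ℝ) (N : ℕ) (hN : 1 ≤ N)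
    (hα : ∑ k ∈ Finset.range N, φ (T^[k] x₀) - N * beta T φ < α) :
    -γ ≤ α := by
  classical
  by_contra hcon
  push_neg at hcon
  -- so α < -γ, i.e. γ + α < 0
  have hαγ : γ + α < 0 := by linarith
  set b := beta T φ with hb
  set ψ : X → ℝ := fun x => φ x - b with hψ
  set S : ℕ → X → ℝ := fun n x => ∑ k ∈ Finset.range n, ψ (T^[k] x) with hSdef
  have hφc : Continuous φ := hφ.continuous
  have hψc : Continuous ψ := hφc.sub continuous_const
  have hTk : ∀ k : ℕ, Continuous (T^[k]) := fun k => hT.iterate k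
  have hScont : ∀ n, Continuous (S n) := by
    intro n
    exact continuous_finset_sum _ fun k _ => hψc.comp (hTk k)
  have hSeq : ∀ n x, S n x = (∑ k ∈ Finset.range n, φ (T^[k] x)) - n * b := by
    intro n x
    simp only [hSdef, hψ, Finset.sum_sub_distrib, Finset.sum_const, Finset.card_range,
      nsmul_eq_mul]
  -- integrability helpers
  have hintC : ∀ f : X → ℝ, Continuous f → Integrable f μ := fun f hf =>
    (integrableOn_univ).mp (hf.locallyIntegrable.integrableOn_isCompact isCompact_univ)
  -- invariance under iterates
  have hmapk : ∀ k : ℕ, μ.map (T^[k]) = μ := by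
    intro k
    induction k with
    | zero => simp
    | succ k ih =>
      rw [Function.iterate_succ, ← Measure.map_map (hTk k).measurable hT.measurable, hμinv, ih]
  have hintcomp : ∀ (f : X → ℝ), Continuous f → ∀ k : ℕ,
      ∫ x, f (T^[k] x) ∂μ = ∫ x, f x ∂μ := by
    intro f hf k
    rw [← hmapk k, integral_map (hTk k).measurable.aemeasurable hf.aestronglyMeasurable,
      hmapk k]
  have hψint : ∫ x, ψ x ∂μ = 0 := by
    rw [hψ]
    rw [integral_sub (hintC φ hφc) (integrable_const b), integral_const]
    simp [hμmax, ← hb]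
  have hSint : ∀ n, ∫ x, S n x ∂μ = 0 := by
    intro n
    show ∫ x, ∑ k ∈ Finset.range n, ψ (T^[k] x) ∂μ = 0
    rw [integral_finset_sum _ (fun k _ =>
      hintC (fun x => ψ (T^[k] x)) (Continuous.comp hψc (hTk k)))]
    have : ∀ k ∈ Finset.range n, ∫ x, ψ (T^[k] x) ∂μ = 0 := by
      intro k _
      rw [hintcomp ψ hψc k, hψint]
    rw [Finset.sum_congr rfl this]
    simp
  -- γ ≥ 0
  have hγ0 : 0 ≤ γ := by
    have hψγ : ∀ x, ψ x ≤ γ := by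
      intro x
      have := hγ 1 le_rfl x
      simpa [hψ, ← hb] using this
    have h0 : ∫ x, ψ x ∂μ ≤ ∫ _ : X, γ ∂μ :=
      integral_mono (hintC ψ hψc) (integrable_const γ) hψγ
    rw [hψint, integral_const] at h0
    simpa using h0
  -- S n x ≤ γ for all n
  have hγ' : ∀ n x, S n x ≤ γ := by
    intro n x
    rcases Nat.eq_zero_or_pos n with h0 | h1
    · simpa [h0, hSdef] using hγ0
    · rw [hSeq]; exact hγ n h1 x
  -- cocycle property
  have hSadd : ∀ (a c : ℕ) (x : X), S (a + c) x = S a x + S c (T^[a] x) := by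
    intro a c x
    simp only [hSdef]
    rw [Finset.sum_range_add]
    congr 1
    refine Finset.sum_congr rfl fun k _ => ?_
    rw [add_comm a k, Function.iterate_add_apply]
  -- the set A
  set A : Set X := {x | S N x < α} with hA
  have hAopen : IsOpen A := isOpen_lt (hScont N) continuous_const
  have hAmeas : MeasurableSet A := hAopen.measurableSet
  have hx₀A : x₀ ∈ A := by
    show S N x₀ < α
    rw [hSeq]; exact hα
  have hμA : 0 < μ A := hx₀ A hAopen hx₀A
  set a : ℝ := (μ A).toReal with ha
  have ha0 : 0 < a := ENNReal.toReal_pos hμA.ne' (measure_ne_top μ A)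
  -- visit sets
  set V : ℕ → X → Finset ℕ := fun n x =>
    (Finset.range n).filter (fun t => t + N ≤ n ∧ T^[t] x ∈ A) with hV
  have hN1 : (1 : ℝ) ≤ (N : ℝ) := by exact_mod_cast hN
  -- the key pointwise estimate
  have key : ∀ n x, (N : ℝ) * S n x ≤ N * γ + (γ + α) * ((V n x).card : ℝ) := by
    intro n
    induction n using Nat.strong_induction_on with
    | _ n ih =>
      intro x
      by_cases hex : ∃ t, t + N ≤ n ∧ T^[t] x ∈ A
      · set t := Nat.find hex with htdef
        obtain ⟨htn, htA⟩ := Nat.find_spec hex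
        have htmin : ∀ s, s < t → ¬(s + N ≤ n ∧ T^[s] x ∈ A) := fun s hs => Nat.find_min hex hs
        set m := n - (t + N) with hm
        have hnm : n = t + N + m := by omega
        set y := T^[t + N] x with hy
        have hsplit : S n x = S t x + S N (T^[t] x) + S m y := by
          rw [hnm, hSadd (t + N) m x, hSadd t N x]
        have h1 : S t x ≤ γ := hγ' t x
        have h2 : S N (T^[t] x) ≤ α := le_of_lt htA
        have h3 : (N : ℝ) * S m y ≤ N * γ + (γ + α) * ((V m y).card : ℝ) :=
          ih m (by omega) y
        -- card bound
        have hcard : (V n x).card ≤ N + (V m y).card := by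
          have hsub : V n x ⊆ Finset.Ico t (t + N) ∪
              (V m y).image (fun s => s + (t + N)) := by
            intro s hs
            simp only [hV, Finset.mem_filter, Finset.mem_range] at hs
            obtain ⟨hsn, hsN, hsA⟩ := hs
            have hst : t ≤ s := by
              by_contra hlt
              push_neg at hlt
              exact htmin s hlt ⟨by omega, hsA⟩
            rcases lt_or_ge s (t + N) with hcase | hcase
            · exact Finset.mem_union_left _ (Finset.mem_Ico.mpr ⟨hst, hcase⟩)
            · refine Finset.mem_union_right _ ?_
              rw [Finset.mem_image]
              refine ⟨s - (t + N), ?_, by omega⟩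
              simp only [hV, Finset.mem_filter, Finset.mem_range]
              have hiter : T^[s - (t + N)] y = T^[s] x := by
                rw [hy, ← Function.iterate_add_apply]
                congr 1
                omega
              exact ⟨by omega, by omega, by rw [hiter]; exact hsA⟩
          calc (V n x).card ≤ (Finset.Ico t (t + N) ∪
              (V m y).image (fun s => s + (t + N))).card := Finset.card_le_card hsub
            _ ≤ (Finset.Ico t (t + N)).card +
                ((V m y).image (fun s => s + (t + N))).card := Finset.card_union_le _ _
            _ ≤ N + (V m y).card := by
                rw [Nat.card_Ico]
                exact Nat.add_le_add (by omega) (Finset.card_image_le)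
        have hcardR : ((V n x).card : ℝ) ≤ (N : ℝ) + ((V m y).card : ℝ) := by
          exact_mod_cast hcard
        have hprod : (γ + α) * ((N : ℝ) + ((V m y).card : ℝ)) ≤
            (γ + α) * ((V n x).card : ℝ) :=
          mul_le_mul_of_nonpos_left hcardR (le_of_lt hαγ)
        rw [hsplit]
        nlinarith [hprod, h3, mul_le_mul_of_nonneg_left h1 (by linarith : (0:ℝ) ≤ N),
          mul_le_mul_of_nonneg_left h2 (by linarith : (0:ℝ) ≤ N)]
      · have hcard0 : (V n x).card = 0 := by
          rw [Finset.card_eq_zero, hV]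
          rw [Finset.filter_eq_empty_iff]
          intro s _
          exact fun h => hex ⟨s, h⟩
        rw [hcard0]
        push_cast
        have := hγ' n x
        nlinarith
  -- integral of the visit count
  have hVrepr : ∀ n x, ((V n x).card : ℝ) =
      ∑ t ∈ (Finset.range n).filter (fun t => t + N ≤ n),
        (T^[t] ⁻¹' A).indicator (fun _ => (1 : ℝ)) x := by
    intro n x
    have : V n x = ((Finset.range n).filter (fun t => t + N ≤ n)).filter
        (fun t => T^[t] x ∈ A) := by
      rw [hV, Finset.filter_filter]
    rw [this, Finset.card_filter]
    push_cast
    refine Finset.sum_congr rfl fun t _ => ?_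
    by_cases h : T^[t] x ∈ A <;> simp [Set.indicator_apply, h]
  have hindint : ∀ t : ℕ, Integrable ((T^[t] ⁻¹' A).indicator (fun _ => (1 : ℝ))) μ :=
    fun t => (integrable_const (1 : ℝ)).indicator ((hTk t).measurable hAmeas)
  have hindval : ∀ t : ℕ,
      ∫ x, (T^[t] ⁻¹' A).indicator (fun _ => (1 : ℝ)) x ∂μ = a := by
    intro t
    rw [integral_indicator_const (1 : ℝ) ((hTk t).measurable hAmeas)]
    have : μ (T^[t] ⁻¹' A) = μ A := by
      rw [← Measure.map_apply (hTk t).measurable hAmeas, hmapk t]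
    rw [measureReal_def, this]
    simp [ha]
  have hVint : ∀ n, Integrable (fun x => ((V n x).card : ℝ)) μ := by
    intro n
    have : (fun x => ((V n x).card : ℝ)) =
        fun x => ∑ t ∈ (Finset.range n).filter (fun t => t + N ≤ n),
          (T^[t] ⁻¹' A).indicator (fun _ => (1 : ℝ)) x := funext fun x => hVrepr n x
    rw [this]
    exact integrable_finset_sum _ fun t _ => hindint t
  have hVval : ∀ n, ∫ x, ((V n x).card : ℝ) ∂μ =
      (((Finset.range n).filter (fun t => t + N ≤ n)).card : ℝ) * a := by
    intro n
    simp_rw [hVrepr]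
    rw [integral_finset_sum _ fun t _ => hindint t]
    rw [Finset.sum_congr rfl fun t _ => hindval t]
    rw [Finset.sum_const, nsmul_eq_mul]
  -- choose n large
  obtain ⟨M, hM⟩ := exists_nat_gt ((N : ℝ) * γ / (-(γ + α) * a))
  set n := N + M with hn
  have hFcard : ((Finset.range n).filter (fun t => t + N ≤ n)).card = M + 1 := by
    have : (Finset.range n).filter (fun t => t + N ≤ n) = Finset.range (M + 1) := by
      ext s
      simp only [Finset.mem_filter, Finset.mem_range, hn]
      omega
    rw [this, Finset.card_range]
  -- integrate the key inequality
  have hle : ∫ x, (N : ℝ) * S n x ∂μ ≤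
      ∫ x, ((N : ℝ) * γ + (γ + α) * ((V n x).card : ℝ)) ∂μ := by
    refine integral_mono ((hintC (S n) (hScont n)).const_mul _) ?_ (fun x => key n x)
    exact (integrable_const _).add ((hVint n).const_mul _)
  rw [integral_const_mul, hSint n, mul_zero] at hle
  rw [integral_add (integrable_const _) ((hVint n).const_mul _), integral_const,
    integral_const_mul, hVval n, hFcard] at hle
  simp only [measure_univ, probReal_univ, ENNReal.toReal_one, smul_eq_mul, one_mul] at hle
  -- contradiction
  have hc : 0 < -(γ + α) * a := mul_pos (by linarith) ha0
  rw [div_lt_iff₀ hc] at hM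
  have hγN : 0 ≤ (N : ℝ) * γ := mul_nonneg (by linarith) hγ0
  have hMc : ((M : ℝ) + 1) * (-(γ + α) * a) > (N : ℝ) * γ := by
    nlinarith
  push_cast at hle
  nlinarith
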